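/- Let Y be a nonconstant real random variable with CDF F, let Y₁, Y₂, Y₃ be i.i.d. copies of Y, and φ(y,y') = min{F(y), F(y')}. Then E[φ(Y₁,Y₂)²] - 2E[φ(Y₁,Y₂)φ(Y₁,Y₃)] + (E[φ(Y₁,Y₂)])² > 0. -/

import Mathlib

open MeasureTheory ProbabilityTheory Set

lemma aux_integrable_bdd {α : Type*} [MeasurableSpace α] (P : Measure α) [IsFiniteMeasure P]
    {f : α → ℝ} (hf : AEStronglyMeasurable f P) (C : ℝ) (h : ∀ x, |f x| ≤ C) :
    Integrable f P :=
  (integrable_const C).mono' hf (Filter.Eventually.of_forall h)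

lemma aux_ae_comp {α β : Type*} [MeasurableSpace α] [MeasurableSpace β] {P : Measure α}
    {Q : Measure β} {f : α → β} (hf : AEMeasurable f P) (hmap : P.map f = Q)
    {p : β → Prop} (h : ∀ᵐ y ∂Q, p y) : ∀ᵐ x ∂P, p (f x) :=
  ae_of_ae_map hf (by rwa [hmap])

lemma aux_V (μ : Measure ℝ) (y : ℝ) :
    μ {z | y < z ∧ μ (Set.Ioc y z) = 0} = 0 := by
  set V := {z | y < z ∧ μ (Set.Ioc y z) = 0} with hV
  have Vsub : ∀ z ∈ V, Set.Ioc y z ⊆ V := by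
    intro z hz w hw
    exact ⟨hw.1, le_antisymm (le_trans (measure_mono (Set.Ioc_subset_Ioc le_rfl hw.2)) hz.2.le)
      (zero_le)⟩
  rcases Set.eq_empty_or_nonempty V with hne | hne
  · simp [hne]
  by_cases hbdd : BddAbove V
  · set s := sSup V with hs
    obtain ⟨z₀, hz₀⟩ := hne
    have hys : y < s := lt_of_lt_of_le hz₀.1 (le_csSup hbdd hz₀)
    have hIoo : μ (Set.Ioo y s) = 0 := by
      have hcov : Set.Ioo y s ⊆ ⋃ n : ℕ, Set.Ioc y (s - (s - y)/(n+1)) := by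
        intro w hw
        obtain ⟨n, hn⟩ := exists_nat_one_div_lt (show (0:ℝ) < (s - w)/(s - y) by
          apply div_pos <;> linarith [hw.1, hw.2])
        refine Set.mem_iUnion.mpr ⟨n, hw.1, ?_⟩
        rw [div_lt_div_iff₀ (by positivity) (by linarith [hw.1, hw.2])] at hn
        have : (s - y) / (n + 1) < s - w := by
          rw [div_lt_iff₀ (by positivity)]
          calc s - y = 1 * (s - y) := (one_mul _).symm
          _ < (s - w) * (↑n + 1) := by push_cast at hn ⊢; linarith
        linarith
      refine measure_mono_null hcov (measure_iUnion_null fun n => ?_)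
      rcases Nat.eq_zero_or_pos n with h0 | hpos
      · subst h0; norm_num
      · have hmem : s - (s - y)/(n+1) ∈ V := by
          have h1 : y < s - (s - y)/(n+1) := by
            have : (s - y)/(n+1) < s - y := by
              rw [div_lt_iff₀ (by positivity)]
              nlinarith [hys, (show (1:ℝ) ≤ n from by exact_mod_cast hpos)]
            linarith
          have h2 : s - (s - y)/(n+1) < s := by
            have : (0:ℝ) < (s - y)/(n+1) := div_pos (by linarith) (by positivity)
            linarith
          obtain ⟨z, hzV, hz⟩ := exists_lt_of_lt_csSup ⟨z₀, hz₀⟩ h2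
          exact Vsub z hzV (Set.mem_Ioc.mpr ⟨h1, hz.le⟩)
        exact hmem.2
    by_cases hsV : s ∈ V
    · exact measure_mono_null (fun z hz => Set.mem_Ioc.mpr ⟨hz.1, le_csSup hbdd hz⟩) hsV.2
    · refine measure_mono_null (fun z hz => ?_) hIoo
      exact ⟨hz.1, lt_of_le_of_ne (le_csSup hbdd hz) (fun h => hsV (h ▸ hz))⟩
  · have hcov : V ⊆ ⋃ n : ℕ, Set.Ioc y (y + n) := by
      intro z hz
      obtain ⟨n, hn⟩ := exists_nat_ge (z - y)
      exact Set.mem_iUnion.mpr ⟨n, hz.1, by linarith⟩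
    refine measure_mono_null hcov (measure_iUnion_null fun n => ?_)
    rcases Nat.eq_zero_or_pos n with h0 | hpos
    · subst h0; norm_num
    · obtain ⟨z, hzV, hz⟩ := not_bddAbove_iff.mp hbdd (y + n)
      have hn1 : (1:ℝ) ≤ (n:ℝ) := by exact_mod_cast hpos
      have : y + (n:ℝ) ∈ V := Vsub z hzV (Set.mem_Ioc.mpr ⟨by linarith, hz.le⟩)
      exact this.2


lemma aux_pointmass {μ : Measure ℝ} [IsProbabilityMeasure μ] {F : ℝ → ℝ}
    (hF : ∀ t, F t = (μ (Set.Iic t)).toReal)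
    (h : ∀ r : ℝ, μ {y | F y ≤ r} = 0 ∨ μ {y | F y ≤ r} = 1) :
    ∃ c : ℝ, μ {c} = 1 := by
  have hFmono : Monotone F := fun a b hab => by
    rw [hF a, hF b]
    exact ENNReal.toReal_mono (measure_ne_top μ _) (measure_mono (Set.Iic_subset_Iic.mpr hab))
  have hFmeas : Measurable F := hFmono.measurable
  have hlev : ∀ r : ℝ, MeasurableSet {y | F y ≤ r} := fun r =>
    hFmeas (measurableSet_Iic : MeasurableSet (Set.Iic r))
  have hF0 : ∀ t, 0 ≤ F t := fun t => by rw [hF t]; exact ENNReal.toReal_nonneg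
  have hF1 : ∀ t, F t ≤ 1 := fun t => by
    rw [hF t]
    calc (μ (Set.Iic t)).toReal ≤ (μ Set.univ).toReal :=
      ENNReal.toReal_mono (measure_ne_top μ _) (measure_mono (Set.subset_univ _))
    _ = 1 := by simp
  set Sr := {r : ℝ | μ {y | F y ≤ r} = 1} with hSr
  have hSr1 : (1:ℝ) ∈ Sr := by
    have : {y | F y ≤ (1:ℝ)} = Set.univ := Set.eq_univ_of_forall fun y => hF1 y
    simp [hSr, this]
  have hSrbdd : BddBelow Sr := by
    refine ⟨0, fun r hr => ?_⟩
    by_contra hr0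
    push_neg at hr0
    have : {y | F y ≤ r} = ∅ := by
      ext y; simp only [Set.mem_setOf_eq, Set.mem_empty_iff_false, iff_false, not_le]
      exact lt_of_lt_of_le hr0 (hF0 y)
    simp only [hSr, Set.mem_setOf_eq, this] at hr
    simp at hr
  set c := sInf Sr with hc
  -- μ {F ≤ c} = 1
  have hup : ∀ r r' : ℝ, r ≤ r' → r ∈ Sr → r' ∈ Sr := by
    intro r r' hrr' hr
    have hsub : {y | F y ≤ r} ⊆ {y | F y ≤ r'} := fun y hy => le_trans hy hrr'
    exact le_antisymm prob_le_one (hr ▸ measure_mono hsub)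
  have hclev : μ {y | F y ≤ c} = 1 := by
    have hInter : {y | F y ≤ c} = ⋂ n : ℕ, {y | F y ≤ c + 1/(n+1)} := by
      ext y
      simp only [Set.mem_setOf_eq, Set.mem_iInter]
      constructor
      · intro hy n; have : (0:ℝ) < 1/(n+1) := by positivity
        linarith
      · intro hy
        by_contra hlt
        push_neg at hlt
        obtain ⟨n, hn⟩ := exists_nat_one_div_lt (show (0:ℝ) < F y - c by linarith)
        have := hy n
        push_cast at hn this
        linarith
    rw [hInter]
    rw [← prob_compl_eq_zero_iff (MeasurableSet.iInter fun n => hlev _)] at *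
    rw [Set.compl_iInter]
    refine measure_iUnion_null fun n => ?_
    have hn : (0:ℝ) < 1/(n+1) := by positivity
    obtain ⟨r, hrS, hrlt⟩ := csInf_lt_iff hSrbdd ⟨1, hSr1⟩ |>.mp
      (show c < c + 1/(n+1) by linarith)
    have : c + 1/(↑n+1) ∈ Sr := hup r _ hrlt.le hrS
    rwa [prob_compl_eq_zero_iff (hlev _)]
  have hltlev : μ {y | F y < c} = 0 := by
    have hUnion : {y | F y < c} = ⋃ n : ℕ, {y | F y ≤ c - 1/(n+1)} := by
      ext y
      simp only [Set.mem_setOf_eq, Set.mem_iUnion]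
      constructor
      · intro hy
        obtain ⟨n, hn⟩ := exists_nat_one_div_lt (show (0:ℝ) < c - F y by linarith)
        exact ⟨n, by push_cast at hn ⊢; linarith⟩
      · rintro ⟨n, hn⟩; have : (0:ℝ) < 1/(n+1) := by positivity
        linarith
    rw [hUnion]
    refine measure_iUnion_null fun n => ?_
    rcases h (c - 1/(n+1)) with h0 | h1
    · exact h0
    · exfalso
      have : c - 1/(↑n+1) ∈ Sr := h1
      have hle := csInf_le hSrbdd this
      have : (0:ℝ) < 1/(↑n+1) := by positivity
      rw [← hc] at hle
      linarith
  set S := {y | F y = c} with hS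
  have hSmeas : MeasurableSet S := hFmeas (measurableSet_singleton c)
  have hSfull : μ S = 1 := by
    have hsub : {y | F y ≤ c} ⊆ S ∪ {y | F y < c} := by
      intro y hy
      rcases eq_or_lt_of_le (show F y ≤ c from hy) with he | hl
      · exact Or.inl he
      · exact Or.inr hl
    have hmono : μ {y | F y ≤ c} ≤ μ (S ∪ {y | F y < c}) := measure_mono hsub
    rw [hclev] at hmono
    have h2 : μ (S ∪ {y | F y < c}) ≤ μ S + μ {y | F y < c} := measure_union_le _ _
    rw [hltlev, add_zero] at h2
    exact le_antisymm prob_le_one (le_trans hmono h2)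
  -- every point of S has μ (Iic y) = 1
  have hK : ∀ y ∈ S, μ (Set.Iic y) = 1 := by
    intro y hy
    have hnull : μ (S ∩ Set.Ioi y) = 0 := by
      refine measure_mono_null (fun z hz => ?_) (aux_V μ y)
      have hzy : y < z := hz.2
      have heq : μ (Set.Iic z) = μ (Set.Iic y) := by
        have hz1 : F z = c := hz.1
        have hy1 : F y = c := hy
        rw [hF z] at hz1
        rw [hF y] at hy1
        have h1 : (μ (Set.Iic z)).toReal = (μ (Set.Iic y)).toReal := by rw [hz1, hy1]
        exact (ENNReal.toReal_eq_toReal_iff' (measure_ne_top μ _) (measure_ne_top μ _)).mp h1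
      have : μ (Set.Ioc y z) = 0 := by
        have hdiff : Set.Ioc y z = Set.Iic z \ Set.Iic y := by ext x; simp [and_comm]
        rw [hdiff, measure_diff (Set.Iic_subset_Iic.mpr hzy.le) measurableSet_Iic.nullMeasurableSet
          (measure_ne_top μ _), heq, tsub_self]
      exact ⟨hzy, this⟩
    have hsub : S ⊆ Set.Iic y ∪ (S ∩ Set.Ioi y) := by
      intro z hz
      rcases le_or_gt z y with hzy | hzy
      · exact Or.inl hzy
      · exact Or.inr ⟨hz, hzy⟩
    have h1 := le_trans (hSfull ▸ measure_mono hsub) (measure_union_le _ _)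
    rw [hnull, add_zero] at h1
    exact le_antisymm prob_le_one h1
  have hSne : S.Nonempty := by
    by_contra hne
    rw [Set.not_nonempty_iff_eq_empty] at hne
    rw [hne] at hSfull; simp at hSfull
  have hSbdd : BddBelow S := by
    by_contra hbdd
    have hIic : ∀ n : ℕ, μ (Set.Iic (-(n:ℝ))) = 1 := by
      intro n
      obtain ⟨z, hzS, hz⟩ := not_bddBelow_iff.mp hbdd (-(n:ℝ))
      exact le_antisymm prob_le_one (hK z hzS ▸ measure_mono (Set.Iic_subset_Iic.mpr hz.le))
    have hempty : (⋂ n : ℕ, Set.Iic (-(n:ℝ))) = ∅ := by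
      ext x
      simp only [Set.mem_iInter, Set.mem_Iic, Set.mem_empty_iff_false, iff_false, not_forall,
        not_le]
      obtain ⟨n, hn⟩ := exists_nat_gt (-x)
      exact ⟨n, by linarith⟩
    have : μ (⋂ n : ℕ, Set.Iic (-(n:ℝ))) = 1 := by
      rw [← prob_compl_eq_zero_iff (MeasurableSet.iInter fun _ => measurableSet_Iic)]
      rw [Set.compl_iInter]
      exact measure_iUnion_null fun n => by
        rw [prob_compl_eq_zero_iff measurableSet_Iic]; exact hIic n
    rw [hempty] at this; simp at this
  set a := sInf S with ha
  have hIio : μ (Set.Iio a) = 0 := by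
    have hsub : Set.Iio a ⊆ Sᶜ := by
      intro z hz hzS
      exact absurd (csInf_le hSbdd hzS) (not_le.mpr hz)
    refine measure_mono_null hsub ?_
    rw [prob_compl_eq_zero_iff hSmeas]; exact hSfull
  have hIic : μ (Set.Iic a) = 1 := by
    have hge : ∀ n : ℕ, μ (Set.Iic (a + 1/(n+1))) = 1 := by
      intro n
      have hn : (0:ℝ) < 1/(n+1) := by positivity
      obtain ⟨z, hzS, hz⟩ := csInf_lt_iff hSbdd hSne |>.mp (show a < a + 1/(n+1) by linarith)
      exact le_antisymm prob_le_one (hK z hzS ▸ measure_mono (Set.Iic_subset_Iic.mpr hz.le))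
    have hInter : Set.Iic a = ⋂ n : ℕ, Set.Iic (a + 1/(n+1)) := by
      ext z
      simp only [Set.mem_Iic, Set.mem_iInter]
      constructor
      · intro hz n
        have : (0:ℝ) < 1/(n+1) := by positivity
        linarith
      · intro hz
        by_contra hlt
        push_neg at hlt
        obtain ⟨n, hn⟩ := exists_nat_one_div_lt (show (0:ℝ) < z - a by linarith)
        have := hz n
        push_cast at hn this
        linarith
    rw [hInter, ← prob_compl_eq_zero_iff (MeasurableSet.iInter fun _ => measurableSet_Iic),
      Set.compl_iInter]
    exact measure_iUnion_null fun n => by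
      rw [prob_compl_eq_zero_iff measurableSet_Iic]; exact hge n
  refine ⟨a, ?_⟩
  have : ({a} : Set ℝ) = Set.Iic a \ Set.Iio a := by
    ext z
    simp only [Set.mem_singleton_iff, Set.mem_diff, Set.mem_Iic, Set.mem_Iio, not_lt]
    constructor
    · rintro rfl; exact ⟨le_rfl, le_rfl⟩
    · rintro ⟨h1, h2⟩; exact le_antisymm h1 h2
  have hd : μ (Set.Iic a \ Set.Iio a) = μ (Set.Iic a) - μ (Set.Iio a) :=
    measure_diff Set.Iio_subset_Iic_self measurableSet_Iio.nullMeasurableSet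
      (by rw [hIio]; exact ENNReal.zero_ne_top)
  rw [this, hd, hIic, hIio, tsub_zero]


lemma aux_split {μ : Measure ℝ} [IsProbabilityMeasure μ] {F ψ : ℝ → ℝ} {m r : ℝ}
    (hFmeas : Measurable F)
    (hE : ∀ᵐ p ∂(μ.prod μ), min (F p.1) (F p.2) = ψ p.1 + ψ p.2 - m)
    (hA : μ {y | F y ≤ r} ≠ 0) (hB : μ {y | r < F y} ≠ 0) : False := by
  set ρ := μ.prod μ with hρ
  set P := ρ.prod ρ with hP
  have hmapfst : ρ.map Prod.fst = μ := by
    rw [hρ, Measure.map_fst_prod]; simp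
  have hmapsnd : ρ.map Prod.snd = μ := by
    rw [hρ, Measure.map_snd_prod]; simp
  -- transfer along pairs of coordinates
  have key : ∀ (f g : ℝ × ℝ → ℝ), Measurable f → Measurable g → ρ.map f = μ → ρ.map g = μ →
      ∀ᵐ q : (ℝ × ℝ) × (ℝ × ℝ) ∂P, min (F (f q.1)) (F (g q.2)) = ψ (f q.1) + ψ (g q.2) - m := by
    intro f g hf hg h1 h2
    have hmap : P.map (fun q : (ℝ × ℝ) × (ℝ × ℝ) => (f q.1, g q.2)) = ρ := by
      have heq : (fun q : (ℝ × ℝ) × (ℝ × ℝ) => (f q.1, g q.2)) = Prod.map f g := rfl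
      rw [heq, hP, ← Measure.map_prod_map _ _ hf hg, h1, h2, hρ]
    exact aux_ae_comp ((hf.comp measurable_fst).prodMk (hg.comp measurable_snd)).aemeasurable
      hmap hE
  have e11 : ∀ᵐ q : (ℝ × ℝ) × (ℝ × ℝ) ∂P,
      min (F q.1.1) (F q.2.1) = ψ q.1.1 + ψ q.2.1 - m :=
    key _ _ measurable_fst measurable_fst hmapfst hmapfst
  have e12 : ∀ᵐ q : (ℝ × ℝ) × (ℝ × ℝ) ∂P,
      min (F q.1.1) (F q.2.2) = ψ q.1.1 + ψ q.2.2 - m :=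
    key _ _ measurable_fst measurable_snd hmapfst hmapsnd
  have e21 : ∀ᵐ q : (ℝ × ℝ) × (ℝ × ℝ) ∂P,
      min (F q.1.2) (F q.2.1) = ψ q.1.2 + ψ q.2.1 - m :=
    key _ _ measurable_snd measurable_fst hmapsnd hmapfst
  have eaa : ∀ᵐ q : (ℝ × ℝ) × (ℝ × ℝ) ∂P,
      min (F q.1.1) (F q.1.2) = ψ q.1.1 + ψ q.1.2 - m := by
    have hmap : P.map (Prod.fst : (ℝ × ℝ) × (ℝ × ℝ) → ℝ × ℝ) = ρ := by
      rw [hP, Measure.map_fst_prod]; simp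
    exact aux_ae_comp measurable_fst.aemeasurable hmap hE
  have ebb : ∀ᵐ q : (ℝ × ℝ) × (ℝ × ℝ) ∂P,
      min (F q.2.1) (F q.2.2) = ψ q.2.1 + ψ q.2.2 - m := by
    have hmap : P.map (Prod.snd : (ℝ × ℝ) × (ℝ × ℝ) → ℝ × ℝ) = ρ := by
      rw [hP, Measure.map_snd_prod]; simp
    exact aux_ae_comp measurable_snd.aemeasurable hmap hE
  -- the good set
  have hgood := (((e11.and e12).and e21).and eaa).and ebb
  set A := {y : ℝ | F y ≤ r} with hAdef
  set B := {y : ℝ | r < F y} with hBdef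
  set Z := (A ×ˢ A) ×ˢ (B ×ˢ B) with hZ
  have hZpos : P Z ≠ 0 := by
    have hAm : MeasurableSet A := hFmeas measurableSet_Iic
    have hBm : MeasurableSet B := hFmeas measurableSet_Ioi
    rw [hZ, hP, Measure.prod_prod, hρ, Measure.prod_prod, Measure.prod_prod]
    exact mul_ne_zero (mul_ne_zero hA hA) (mul_ne_zero hB hB)
  -- extract a point
  obtain ⟨q, hqZ, hq⟩ : ∃ q ∈ Z, (((min (F q.1.1) (F q.2.1) = ψ q.1.1 + ψ q.2.1 - m ∧
      min (F q.1.1) (F q.2.2) = ψ q.1.1 + ψ q.2.2 - m) ∧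
      min (F q.1.2) (F q.2.1) = ψ q.1.2 + ψ q.2.1 - m) ∧
      min (F q.1.1) (F q.1.2) = ψ q.1.1 + ψ q.1.2 - m) ∧
      min (F q.2.1) (F q.2.2) = ψ q.2.1 + ψ q.2.2 - m := by
    by_contra hcon
    push_neg at hcon
    refine hZpos (measure_mono_null (fun q hqZ => ?_) (ae_iff.mp hgood))
    intro hq
    exact (hcon q hqZ) hq.1 hq.2
  obtain ⟨⟨⟨⟨h11, h12⟩, h21⟩, haa⟩, hbb⟩ := hq
  obtain ⟨⟨ha1, ha2⟩, hb1, hb2⟩ := hqZ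
  have hFa1 : F q.1.1 ≤ r := ha1
  have hFa2 : F q.1.2 ≤ r := ha2
  have hFb1 : r < F q.2.1 := hb1
  have hFb2 : r < F q.2.2 := hb2
  rw [min_eq_left (le_trans hFa1 hFb1.le)] at h11
  rw [min_eq_left (le_trans hFa1 hFb2.le)] at h12
  rw [min_eq_left (le_trans hFa2 hFb1.le)] at h21
  have hmaxa : max (F q.1.1) (F q.1.2) ≤ r := max_le hFa1 hFa2
  have hminb : r < min (F q.2.1) (F q.2.2) := lt_min hFb1 hFb2
  have hsum := min_add_max (F q.1.1) (F q.1.2)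
  linarith

/-- For a nonconstant random variable `Y` with CDF `F`, i.i.d. copies `Y₁, Y₂, Y₃`
and `φ(y,y') = min(F y, F y')`:
`E[φ(Y₁,Y₂)²] - 2 E[φ(Y₁,Y₂)φ(Y₁,Y₃)] + (E[φ(Y₁,Y₂)])² > 0`. -/
theorem stmt_17 {Ω : Type*} [MeasureSpace Ω] [IsProbabilityMeasure (ℙ : Measure Ω)]
    (Y : Fin 3 → Ω → ℝ) (hY : ∀ i, Measurable (Y i))
    (hindep : iIndepFun Y ℙ)
    (μ : Measure ℝ) (hlaw : ∀ i, Measure.map (Y i) ℙ = μ)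
    (hnonconst : ¬ ∃ c : ℝ, μ {c} = 1)
    (F : ℝ → ℝ) (hF : ∀ t, F t = (μ (Set.Iic t)).toReal)
    (φ : ℝ → ℝ → ℝ) (hφ : ∀ y y', φ y y' = min (F y) (F y')) :
    0 < (∫ ω, (φ (Y 0 ω) (Y 1 ω)) ^ 2 ∂(ℙ : Measure Ω))
      - 2 * (∫ ω, φ (Y 0 ω) (Y 1 ω) * φ (Y 0 ω) (Y 2 ω) ∂(ℙ : Measure Ω))
      + (∫ ω, φ (Y 0 ω) (Y 1 ω) ∂(ℙ : Measure Ω)) ^ 2 := by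
  classical
  haveI hμprob : IsProbabilityMeasure μ := by
    rw [← hlaw 0]; exact Measure.isProbabilityMeasure_map (hY 0).aemeasurable
  have hFmono : Monotone F := fun a b hab => by
    rw [hF a, hF b]
    exact ENNReal.toReal_mono (measure_ne_top μ _) (measure_mono (Set.Iic_subset_Iic.mpr hab))
  have hFmeas : Measurable F := hFmono.measurable
  have hF0 : ∀ t, 0 ≤ F t := fun t => by rw [hF t]; exact ENNReal.toReal_nonneg
  have hF1 : ∀ t, F t ≤ 1 := fun t => by
    rw [hF t]
    calc (μ (Set.Iic t)).toReal ≤ (μ Set.univ).toReal :=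
      ENNReal.toReal_mono (measure_ne_top μ _) (measure_mono (Set.subset_univ _))
    _ = 1 := by simp
  have hφb : ∀ y y', |φ y y'| ≤ 1 := fun y y' => by
    rw [hφ, abs_le]
    exact ⟨le_min (by linarith [hF0 y]) (by linarith [hF0 y']),
      le_trans (min_le_left _ _) (hF1 y)⟩
  have hφm : Measurable (fun p : ℝ × ℝ => φ p.1 p.2) := by
    have heq : (fun p : ℝ × ℝ => φ p.1 p.2) = fun p => min (F p.1) (F p.2) :=
      funext fun p => hφ _ _
    rw [heq]
    exact (hFmeas.comp measurable_fst).min (hFmeas.comp measurable_snd)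
  have hφm1 : ∀ y, Measurable (fun y' => φ y y') := fun y => by
    have heq : (fun y' => φ y y') = fun y' => min (F y) (F y') := funext fun y' => hφ _ _
    rw [heq]
    exact measurable_const.min hFmeas
  have hint1 : ∀ y, Integrable (fun y' => φ y y') μ := fun y =>
    aux_integrable_bdd μ (hφm1 y).aestronglyMeasurable 1 (fun y' => hφb y y')
  set ψ : ℝ → ℝ := fun y => ∫ y', φ y y' ∂μ with hψdef
  have hψb : ∀ y, |ψ y| ≤ 1 := fun y => by
    rw [hψdef]
    calc |∫ y', φ y y' ∂μ| = ‖∫ y', φ y y' ∂μ‖ := rfl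
    _ ≤ 1 * (μ Set.univ).toReal :=
      norm_integral_le_of_norm_le_const (Filter.Eventually.of_forall fun y' => hφb y y')
    _ = 1 := by simp
  have hψmono : Monotone ψ := fun a b hab => by
    refine integral_mono (hint1 a) (hint1 b) fun y' => ?_
    rw [hφ, hφ]
    exact min_le_min (hFmono hab) le_rfl
  have hψmeas : Measurable ψ := hψmono.measurable
  set m : ℝ := ∫ y, ψ y ∂μ with hmdef
  set ρ : Measure (ℝ × ℝ) := μ.prod μ with hρ
  -- integrability helpers over ρ
  have hIρ : ∀ (f : ℝ × ℝ → ℝ), Measurable f → (∀ p, |f p| ≤ 1) → Integrable f ρ :=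
    fun f hf hb => aux_integrable_bdd ρ hf.aestronglyMeasurable 1 hb
  have habmul : ∀ a b : ℝ, |a| ≤ 1 → |b| ≤ 1 → |a * b| ≤ 1 := fun a b ha hb => by
    rw [abs_mul]
    exact mul_le_one₀ ha (abs_nonneg _) hb
  have hψ1m : Measurable (fun p : ℝ × ℝ => ψ p.1) := hψmeas.comp measurable_fst
  have hψ2m : Measurable (fun p : ℝ × ℝ => ψ p.2) := hψmeas.comp measurable_snd
  have iφ : Integrable (fun p : ℝ × ℝ => φ p.1 p.2) ρ := hIρ _ hφm (fun p => hφb _ _)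
  have iφ2 : Integrable (fun p : ℝ × ℝ => φ p.1 p.2 ^ 2) ρ := by
    refine hIρ _ (hφm.pow_const 2) (fun p => ?_)
    rw [sq]
    exact habmul _ _ (hφb _ _) (hφb _ _)
  have iφψ1 : Integrable (fun p : ℝ × ℝ => φ p.1 p.2 * ψ p.1) ρ :=
    hIρ _ (hφm.mul hψ1m) (fun p => habmul _ _ (hφb _ _) (hψb _))
  have iφψ2 : Integrable (fun p : ℝ × ℝ => φ p.1 p.2 * ψ p.2) ρ :=
    hIρ _ (hφm.mul hψ2m) (fun p => habmul _ _ (hφb _ _) (hψb _))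
  have iψ1 : Integrable (fun p : ℝ × ℝ => ψ p.1) ρ := hIρ _ hψ1m (fun p => hψb _)
  have iψ2 : Integrable (fun p : ℝ × ℝ => ψ p.2) ρ := hIρ _ hψ2m (fun p => hψb _)
  have iψψ : Integrable (fun p : ℝ × ℝ => ψ p.1 * ψ p.2) ρ :=
    hIρ _ (hψ1m.mul hψ2m) (fun p => habmul _ _ (hψb _) (hψb _))
  have iψ1sq : Integrable (fun p : ℝ × ℝ => ψ p.1 ^ 2) ρ := by
    refine hIρ _ (hψ1m.pow_const 2) (fun p => ?_)
    rw [sq]; exact habmul _ _ (hψb _) (hψb _)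
  have iψ2sq : Integrable (fun p : ℝ × ℝ => ψ p.2 ^ 2) ρ := by
    refine hIρ _ (hψ2m.pow_const 2) (fun p => ?_)
    rw [sq]; exact habmul _ _ (hψb _) (hψb _)
  have iψsqμ : Integrable (fun y => ψ y ^ 2) μ := by
    refine aux_integrable_bdd μ (hψmeas.pow_const 2).aestronglyMeasurable 1 (fun y => ?_)
    rw [sq]; exact habmul _ _ (hψb _) (hψb _)
  -- basic integral computations over ρ
  have cφ : ∫ p, φ p.1 p.2 ∂ρ = m := by
    rw [hρ, integral_prod _ iφ]
  have cψ1 : ∫ p, ψ p.1 ∂ρ = m := by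
    rw [hρ, integral_prod _ iψ1]
    simp [integral_const, hmdef]
  have cψ2 : ∫ p, ψ p.2 ∂ρ = m := by
    rw [hρ, integral_prod _ iψ2]
    simp [hmdef]
  have cψψ : ∫ p, ψ p.1 * ψ p.2 ∂ρ = m * m := by
    rw [hρ, integral_prod_mul ψ ψ]
  have cψ1sq : ∫ p, ψ p.1 ^ 2 ∂ρ = ∫ y, ψ y ^ 2 ∂μ := by
    rw [hρ, integral_prod _ iψ1sq]
    simp [integral_const]
  have cψ2sq : ∫ p, ψ p.2 ^ 2 ∂ρ = ∫ y, ψ y ^ 2 ∂μ := by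
    rw [hρ, integral_prod _ iψ2sq]
    simp [integral_const]
  have cφψ1 : ∫ p, φ p.1 p.2 * ψ p.1 ∂ρ = ∫ y, ψ y ^ 2 ∂μ := by
    rw [hρ, integral_prod _ iφψ1]
    refine integral_congr_ae (Filter.Eventually.of_forall fun y => ?_)
    show ∫ y', φ y y' * ψ y ∂μ = ψ y ^ 2
    rw [integral_mul_const, sq]
  have hφsymm : ∀ y y', φ y y' = φ y' y := fun y y' => by rw [hφ, hφ, min_comm]
  have cφψ2 : ∫ p, φ p.1 p.2 * ψ p.2 ∂ρ = ∫ y, ψ y ^ 2 ∂μ := by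
    have hcomp := (Measure.measurePreserving_swap (μ := μ) (ν := μ)).integral_comp
      MeasurableEquiv.prodComm.measurableEmbedding (fun q : ℝ × ℝ => φ q.1 q.2 * ψ q.1)
    rw [← cφψ1, hρ, ← hcomp]
    refine integral_congr_ae (Filter.Eventually.of_forall fun p => ?_)
    show φ p.1 p.2 * ψ p.2 = φ p.2 p.1 * ψ p.2
    rw [hφsymm]
  -- reduction of the Ω-integrals
  have hmap2 : Measure.map (fun ω => (Y 0 ω, Y 1 ω)) ℙ = ρ := by
    have h01 : IndepFun (Y 0) (Y 1) ℙ := hindep.indepFun (by decide)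
    have h := (indepFun_iff_map_prod_eq_prod_map_map (hY 0).aemeasurable
      (hY 1).aemeasurable).mp h01
    rw [hρ]
    rwa [hlaw 0, hlaw 1] at h
  have hmap3 : Measure.map (fun ω => (Y 0 ω, (Y 1 ω, Y 2 ω))) ℙ = μ.prod ρ := by
    have h12 : IndepFun (Y 1) (Y 2) ℙ := hindep.indepFun (by decide)
    have hm12 : Measure.map (fun ω => (Y 1 ω, Y 2 ω)) ℙ = ρ := by
      have h := (indepFun_iff_map_prod_eq_prod_map_map (hY 1).aemeasurable
        (hY 2).aemeasurable).mp h12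
      rw [hρ]
      rwa [hlaw 1, hlaw 2] at h
    have h0 : IndepFun (Y 0) (fun ω => (Y 1 ω, Y 2 ω)) ℙ :=
      (hindep.indepFun_prodMk hY 1 2 0 (by decide) (by decide)).symm
    have h := (indepFun_iff_map_prod_eq_prod_map_map (hY 0).aemeasurable
      ((hY 1).prodMk (hY 2)).aemeasurable).mp h0
    rwa [hlaw 0, hm12] at h
  have hT1 : ∫ ω, (φ (Y 0 ω) (Y 1 ω)) ^ 2 ∂(ℙ : Measure Ω) = ∫ p, φ p.1 p.2 ^ 2 ∂ρ := by
    rw [← hmap2, integral_map ((hY 0).prodMk (hY 1)).aemeasurable]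
    exact (hφm.pow_const 2).aestronglyMeasurable.mono_measure (le_of_eq hmap2)
  have hT3 : ∫ ω, φ (Y 0 ω) (Y 1 ω) ∂(ℙ : Measure Ω) = m := by
    rw [← cφ, ← hmap2, integral_map ((hY 0).prodMk (hY 1)).aemeasurable]
    exact hφm.aestronglyMeasurable.mono_measure (le_of_eq hmap2)
  have hGm : Measurable (fun q : ℝ × (ℝ × ℝ) => φ q.1 q.2.1 * φ q.1 q.2.2) := by
    have h1 : Measurable (fun q : ℝ × (ℝ × ℝ) => (q.1, q.2.1)) :=
      measurable_fst.prodMk (measurable_fst.comp measurable_snd)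
    have h2 : Measurable (fun q : ℝ × (ℝ × ℝ) => (q.1, q.2.2)) :=
      measurable_fst.prodMk (measurable_snd.comp measurable_snd)
    exact (hφm.comp h1).mul (hφm.comp h2)
  have hT2 : ∫ ω, φ (Y 0 ω) (Y 1 ω) * φ (Y 0 ω) (Y 2 ω) ∂(ℙ : Measure Ω)
      = ∫ y, ψ y ^ 2 ∂μ := by
    have step1 : ∫ ω, φ (Y 0 ω) (Y 1 ω) * φ (Y 0 ω) (Y 2 ω) ∂(ℙ : Measure Ω)
        = ∫ q, φ q.1 q.2.1 * φ q.1 q.2.2 ∂(μ.prod ρ) := by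
      rw [← hmap3, integral_map ((hY 0).prodMk ((hY 1).prodMk (hY 2))).aemeasurable]
      exact hGm.aestronglyMeasurable.mono_measure (le_of_eq hmap3)
    have hGint : Integrable (fun q : ℝ × (ℝ × ℝ) => φ q.1 q.2.1 * φ q.1 q.2.2) (μ.prod ρ) :=
      aux_integrable_bdd _ hGm.aestronglyMeasurable 1
        (fun q => habmul _ _ (hφb _ _) (hφb _ _))
    rw [step1, integral_prod _ hGint]
    refine integral_congr_ae (Filter.Eventually.of_forall fun y => ?_)
    show ∫ z : ℝ × ℝ, φ y z.1 * φ y z.2 ∂ρ = ψ y ^ 2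
    rw [hρ, integral_prod_mul (fun a => φ y a) (fun a => φ y a), sq]
  rw [hT1, hT2, hT3]
  -- the key identity: the quantity equals ∫ g², g p = φ p.1 p.2 - ψ p.1 - ψ p.2 + m
  set g : ℝ × ℝ → ℝ := fun p => φ p.1 p.2 - ψ p.1 - ψ p.2 + m with hgdef
  have hgm : Measurable g := ((hφm.sub hψ1m).sub hψ2m).add_const m
  have hmb : |m| ≤ 1 := by
    rw [hmdef]
    calc |∫ y, ψ y ∂μ| = ‖∫ y, ψ y ∂μ‖ := rfl
    _ ≤ 1 * (μ Set.univ).toReal :=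
      norm_integral_le_of_norm_le_const (Filter.Eventually.of_forall fun y => hψb y)
    _ = 1 := by simp
  have hgb : ∀ p, |g p| ≤ 4 := fun p => by
    have h1 := abs_le.mp (hφb p.1 p.2)
    have h2 := abs_le.mp (hψb p.1)
    have h3 := abs_le.mp (hψb p.2)
    have h4 := abs_le.mp hmb
    have hgp : g p = φ p.1 p.2 - ψ p.1 - ψ p.2 + m := rfl
    rw [hgp, abs_le]
    constructor <;> linarith
  have ig2 : Integrable (fun p => g p ^ 2) ρ :=
    aux_integrable_bdd ρ (hgm.pow_const 2).aestronglyMeasurable 16 (fun p => by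
      rw [sq, abs_mul]
      nlinarith [hgb p, abs_nonneg (g p)])
  have j10 : Integrable (fun _ : ℝ × ℝ => m ^ 2) ρ := integrable_const _
  have j9 : Integrable (fun p : ℝ × ℝ => (-(2*m)) * ψ p.2 + m ^ 2) ρ :=
    (iψ2.const_mul _).add j10
  have j8 : Integrable (fun p : ℝ × ℝ => (-(2*m)) * ψ p.1 + ((-(2*m)) * ψ p.2 + m ^ 2)) ρ :=
    (iψ1.const_mul _).add j9
  have j7 : Integrable (fun p : ℝ × ℝ => 2 * (ψ p.1 * ψ p.2)
      + ((-(2*m)) * ψ p.1 + ((-(2*m)) * ψ p.2 + m ^ 2))) ρ :=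
    (iψψ.const_mul _).add j8
  have j6 : Integrable (fun p : ℝ × ℝ => ψ p.2 ^ 2 + (2 * (ψ p.1 * ψ p.2)
      + ((-(2*m)) * ψ p.1 + ((-(2*m)) * ψ p.2 + m ^ 2)))) ρ :=
    iψ2sq.add j7
  have j5 : Integrable (fun p : ℝ × ℝ => ψ p.1 ^ 2 + (ψ p.2 ^ 2 + (2 * (ψ p.1 * ψ p.2)
      + ((-(2*m)) * ψ p.1 + ((-(2*m)) * ψ p.2 + m ^ 2))))) ρ :=
    iψ1sq.add j6
  have j4 : Integrable (fun p : ℝ × ℝ => (2*m) * φ p.1 p.2 + (ψ p.1 ^ 2 + (ψ p.2 ^ 2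
      + (2 * (ψ p.1 * ψ p.2) + ((-(2*m)) * ψ p.1 + ((-(2*m)) * ψ p.2 + m ^ 2)))))) ρ :=
    (iφ.const_mul _).add j5
  have j3 : Integrable (fun p : ℝ × ℝ => (-2) * (φ p.1 p.2 * ψ p.2) + ((2*m) * φ p.1 p.2
      + (ψ p.1 ^ 2 + (ψ p.2 ^ 2 + (2 * (ψ p.1 * ψ p.2) + ((-(2*m)) * ψ p.1
      + ((-(2*m)) * ψ p.2 + m ^ 2))))))) ρ :=
    (iφψ2.const_mul _).add j4
  have j2 : Integrable (fun p : ℝ × ℝ => (-2) * (φ p.1 p.2 * ψ p.1) + ((-2) * (φ p.1 p.2 * ψ p.2)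
      + ((2*m) * φ p.1 p.2 + (ψ p.1 ^ 2 + (ψ p.2 ^ 2 + (2 * (ψ p.1 * ψ p.2)
      + ((-(2*m)) * ψ p.1 + ((-(2*m)) * ψ p.2 + m ^ 2)))))))) ρ :=
    (iφψ1.const_mul _).add j3
  have hexp : ∫ p, g p ^ 2 ∂ρ
      = (∫ p, φ p.1 p.2 ^ 2 ∂ρ) - 2 * (∫ y, ψ y ^ 2 ∂μ) + m ^ 2 := by
    have hcong : ∫ p, g p ^ 2 ∂ρ = ∫ p, (φ p.1 p.2 ^ 2 + ((-2) * (φ p.1 p.2 * ψ p.1)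
        + ((-2) * (φ p.1 p.2 * ψ p.2) + ((2*m) * φ p.1 p.2 + (ψ p.1 ^ 2 + (ψ p.2 ^ 2
        + (2 * (ψ p.1 * ψ p.2) + ((-(2*m)) * ψ p.1 + ((-(2*m)) * ψ p.2 + m ^ 2))))))))) ∂ρ := by
      refine integral_congr_ae (Filter.Eventually.of_forall fun p => ?_)
      show (φ p.1 p.2 - ψ p.1 - ψ p.2 + m) ^ 2 = _
      ring
    rw [hcong, integral_add iφ2 j2, integral_add (iφψ1.const_mul _) j3,
      integral_add (iφψ2.const_mul _) j4, integral_add (iφ.const_mul _) j5,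
      integral_add iψ1sq j6, integral_add iψ2sq j7, integral_add (iψψ.const_mul _) j8,
      integral_add (iψ1.const_mul _) j9, integral_add (iψ2.const_mul _) j10,
      integral_const_mul, integral_const_mul, integral_const_mul, integral_const_mul,
      integral_const_mul, integral_const_mul, integral_const, cφψ1, cφψ2, cφ, cψ1sq, cψ2sq, cψψ, cψ1, cψ2]
    simp only [measure_univ, ENNReal.toReal_one, smul_eq_mul, one_mul, probReal_univ, mul_one]
    ring
  have hnn : 0 ≤ ∫ p, g p ^ 2 ∂ρ := integral_nonneg fun p => sq_nonneg _
  by_contra hcon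
  push_neg at hcon
  have hzero : ∫ p, g p ^ 2 ∂ρ = 0 := le_antisymm (by rw [hexp]; exact hcon) hnn
  have hae0 : ∀ᵐ p ∂ρ, g p = 0 := by
    have h := (integral_eq_zero_iff_of_nonneg (fun p => sq_nonneg (g p)) ig2).mp hzero
    filter_upwards [h] with p hp
    have hp2 : g p ^ 2 = 0 := by simpa using hp
    exact (pow_eq_zero_iff two_ne_zero).mp hp2
  have hE : ∀ᵐ p ∂(μ.prod μ), min (F p.1) (F p.2) = ψ p.1 + ψ p.2 - m := by
    rw [← hρ]
    filter_upwards [hae0] with p hp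
    have hgp : g p = φ p.1 p.2 - ψ p.1 - ψ p.2 + m := rfl
    rw [hgp] at hp
    rw [← hφ]
    linarith
  by_cases hall : ∀ r : ℝ, μ {y | F y ≤ r} = 0 ∨ μ {y | F y ≤ r} = 1
  · exact hnonconst (aux_pointmass hF hall)
  · push_neg at hall
    obtain ⟨r, hr0, hr1⟩ := hall
    have hBne : μ {y | r < F y} ≠ 0 := by
      intro hB0
      apply hr1
      have hcompl : {y : ℝ | r < F y} = {y : ℝ | F y ≤ r}ᶜ := by
        ext y; simp [not_le]
      rw [hcompl] at hB0
      exact (prob_compl_eq_zero_iff (hFmeas measurableSet_Iic)).mp hB0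
    exact aux_split hFmeas hE hr0 hBne
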